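/- Let q > 1 be real and n ≥ 1 a natural number; write a = qⁿ and [m]_q = (q^m − q^{−m})/(q − q^{−1}). Define r = (q²+1)(q^{2n+8}+3q^{2n+10}+2q^{2n+12}+2q^{2n+14}−q^6−3q^4−2q^2−2)/(2q^{2n+8}+4q^{2n+10}+4q^{2n+12}+4q^{2n+14}+q^{2n+16}−2q^8−4q^6−4q^4−4q^2−1). Define g = a³(q^18+2q^17+4q^16+4q^15+4q^14+5q^13+4q^12+4q^11+2q^10+q^9) + a²(−2q^17−q^16−4q^15−4q^14−5q^13−4q^12−4q^11−4q^10−q^9−2q^8) + a(−2q^10−q^9−4q^8−4q^7−4q^6−5q^5−4q^4−4q^3−q^2−2q) + (q^9+2q^8+4q^7+4q^6+5q^5+4q^4+4q^3+4q^2+2q+1); define h = a³(q^18−2q^17+4q^16−4q^15+4q^14−5q^13+4q^12−4q^11+2q^10−q^9) + a²(−2q^17+q^16−4q^15+4q^14−5q^13+4q^12−4q^11+4q^10−q^9+2q^8) + a(−2q^10+q^9−4q^8+4q^7−4q^6+5q^5−4q^4+4q^3−q^2+2q) + (q^9−2q^8+4q^7−4q^6+5q^5−4q^4+4q^3−4q^2+2q−1);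 and define k = −q^{n+1}(q−1)(q+1)(q²+1)(a²(2q^14+2q^12+3q^10+q^8)−q^6−3q^4−2q^2−2)(a²(q^16+4q^14+4q^12+4q^10+2q^8)−2q^8−4q^6−4q^4−4q^2−1). Then r·[n]_q − [n+2]_q/r + 2 = g·h/k. -/

import Mathlib

/-- The quantum integer `[m]_q = (q^m - q^{-m})/(q - q^{-1})`. -/
noncomputable def qint (q : ℝ) (m : ℕ) : ℝ :=
  (q ^ (m : ℤ) - q ^ (-(m : ℤ))) / (q - q⁻¹)

set_option maxHeartbeats 2000000 in
set_option maxRecDepth 100000 in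
theorem stmt_14 (q : ℝ) (hq : 1 < q) (n : ℕ) (hn : 1 ≤ n)
    (a r g h k : ℝ)
    (ha : a = q ^ n)
    (hr : r = (q^2 + 1) *
        (q^(2*n+8) + 3*q^(2*n+10) + 2*q^(2*n+12) + 2*q^(2*n+14) - q^6 - 3*q^4 - 2*q^2 - 2) /
      (2*q^(2*n+8) + 4*q^(2*n+10) + 4*q^(2*n+12) + 4*q^(2*n+14) + q^(2*n+16)
        - 2*q^8 - 4*q^6 - 4*q^4 - 4*q^2 - 1))
    (hg : g = a^3 * (q^18 + 2*q^17 + 4*q^16 + 4*q^15 + 4*q^14 + 5*q^13 + 4*q^12 + 4*q^11 + 2*q^10 + q^9)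
      + a^2 * (-2*q^17 - q^16 - 4*q^15 - 4*q^14 - 5*q^13 - 4*q^12 - 4*q^11 - 4*q^10 - q^9 - 2*q^8)
      + a * (-2*q^10 - q^9 - 4*q^8 - 4*q^7 - 4*q^6 - 5*q^5 - 4*q^4 - 4*q^3 - q^2 - 2*q)
      + (q^9 + 2*q^8 + 4*q^7 + 4*q^6 + 5*q^5 + 4*q^4 + 4*q^3 + 4*q^2 + 2*q + 1))
    (hh : h = a^3 * (q^18 - 2*q^17 + 4*q^16 - 4*q^15 + 4*q^14 - 5*q^13 + 4*q^12 - 4*q^11 + 2*q^10 - q^9)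
      + a^2 * (-2*q^17 + q^16 - 4*q^15 + 4*q^14 - 5*q^13 + 4*q^12 - 4*q^11 + 4*q^10 - q^9 + 2*q^8)
      + a * (-2*q^10 + q^9 - 4*q^8 + 4*q^7 - 4*q^6 + 5*q^5 - 4*q^4 + 4*q^3 - q^2 + 2*q)
      + (q^9 - 2*q^8 + 4*q^7 - 4*q^6 + 5*q^5 - 4*q^4 + 4*q^3 - 4*q^2 + 2*q - 1))
    (hk : k = -q^(n+1) * (q - 1) * (q + 1) * (q^2 + 1) *
      (a^2 * (2*q^14 + 2*q^12 + 3*q^10 + q^8) - q^6 - 3*q^4 - 2*q^2 - 2) *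
      (a^2 * (q^16 + 4*q^14 + 4*q^12 + 4*q^10 + 2*q^8) - 2*q^8 - 4*q^6 - 4*q^4 - 4*q^2 - 1)) :
    r * qint q n - qint q (n + 2) / r + 2 = g * h / k := by
  have hq0 : (0:ℝ) < q := lt_trans one_pos hq
  have hqne : q ≠ 0 := ne_of_gt hq0
  have ha1 : 1 < a := by rw [ha]; exact one_lt_pow₀ hq (by omega)
  have ha0 : (0:ℝ) < a := lt_trans one_pos ha1
  have hane : a ≠ 0 := ne_of_gt ha0
  have hqinv : q⁻¹ < 1 := by rw [inv_lt_one_iff₀]; right; exact hq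
  have hdq : q - q⁻¹ ≠ 0 := ne_of_gt (by linarith)
  have ha2 : (1:ℝ) < a^2 := one_lt_pow₀ ha1 (by norm_num)
  have hP : ∀ c : ℕ, q^c < a^2*q^c := fun c =>
    (lt_mul_iff_one_lt_left (pow_pos hq0 c)).mpr ha2
  have hQ : ∀ i j : ℕ, i ≤ j → q^i ≤ q^j := fun i j hij => pow_le_pow_right₀ hq.le hij
  have hO : ∀ c : ℕ, (1:ℝ) ≤ q^c := fun c => one_le_pow₀ hq.le
  have hq2 : (1:ℝ) < q^2 := one_lt_pow₀ hq (by norm_num)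
  have hq21ne : q^2 - 1 ≠ 0 := ne_of_gt (by linarith)
  -- rewrite quantum integers
  have e1 : qint q n = q * (a^2 - 1) / (a * (q^2 - 1)) := by
    rw [qint, zpow_neg, zpow_natCast, ← ha, div_eq_div_iff hdq (mul_ne_zero hane hq21ne)]
    field_simp
  have e2 : qint q (n + 2) = q * (a^2 * q^4 - 1) / (a * q^2 * (q^2 - 1)) := by
    rw [qint, zpow_neg, zpow_natCast, pow_add, ← ha, div_eq_div_iff hdq (mul_ne_zero (mul_ne_zero hane (pow_ne_zero 2 hqne)) hq21ne)]
    field_simp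
  -- rewrite powers of q^n in terms of a
  have hp : ∀ c : ℕ, q ^ (2*n + c) = a^2 * q^c := by
    intro c
    rw [pow_add, ha, ← pow_mul, mul_comm n 2]
  have hp1 : q ^ (n + 1) = a * q := by rw [pow_add, ha, pow_one]
  rw [hp 8, hp 10, hp 12, hp 14, hp 16] at hr
  rw [hp1] at hk
  -- nonvanishing facts
  have hN : (0:ℝ) < a^2*q^8 + 3*(a^2*q^10) + 2*(a^2*q^12) + 2*(a^2*q^14)
      - q^6 - 3*q^4 - 2*q^2 - 2 := by
    linarith [hP 8, hP 10, hP 12, hP 14, hQ 6 8 (by norm_num), hQ 4 10 (by norm_num),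
      hQ 2 12 (by norm_num), hO 14]
  have hD : (0:ℝ) < 2*(a^2*q^8) + 4*(a^2*q^10) + 4*(a^2*q^12) + 4*(a^2*q^14)
      + a^2*q^16 - 2*q^8 - 4*q^6 - 4*q^4 - 4*q^2 - 1 := by
    linarith [hP 8, hP 10, hP 12, hP 14, hP 16, hQ 6 10 (by norm_num),
      hQ 4 12 (by norm_num), hQ 2 14 (by norm_num), hO 16]
  have hDne : 2*(a^2*q^8) + 4*(a^2*q^10) + 4*(a^2*q^12) + 4*(a^2*q^14)
      + a^2*q^16 - 2*q^8 - 4*q^6 - 4*q^4 - 4*q^2 - 1 ≠ 0 := ne_of_gt hD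
  have hq21 : (0:ℝ) < q^2 + 1 := by positivity
  have hNall : (0:ℝ) < (q^2 + 1) *
      (a^2*q^8 + 3*(a^2*q^10) + 2*(a^2*q^12) + 2*(a^2*q^14) - q^6 - 3*q^4 - 2*q^2 - 2) :=
    mul_pos hq21 hN
  have hrpos : 0 < r := by rw [hr]; exact div_pos hNall hD
  have hrne : r ≠ 0 := ne_of_gt hrpos
  have hF1 : (0:ℝ) < a^2 * (2*q^14 + 2*q^12 + 3*q^10 + q^8) - q^6 - 3*q^4 - 2*q^2 - 2 := by
    linarith [hP 14, hP 12, hP 10, hP 8, hQ 6 14 (by norm_num), hQ 4 12 (by norm_num),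
      hQ 2 10 (by norm_num), hO 8]
  have hF2 : (0:ℝ) < a^2 * (q^16 + 4*q^14 + 4*q^12 + 4*q^10 + 2*q^8)
      - 2*q^8 - 4*q^6 - 4*q^4 - 4*q^2 - 1 := by
    linarith [hP 16, hP 14, hP 12, hP 10, hP 8, hQ 8 16 (by norm_num),
      hQ 6 14 (by norm_num), hQ 4 12 (by norm_num), hQ 2 10 (by norm_num), hO 8]
  have hkne : k ≠ 0 := by
    have h1 : (0:ℝ) < q - 1 := by linarith
    have h2 : (0:ℝ) < q + 1 := by linarith
    have hprod : (0:ℝ) < a * q * (q - 1) * (q + 1) * (q^2 + 1) *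
        (a^2 * (2*q^14 + 2*q^12 + 3*q^10 + q^8) - q^6 - 3*q^4 - 2*q^2 - 2) *
        (a^2 * (q^16 + 4*q^14 + 4*q^12 + 4*q^10 + 2*q^8)
          - 2*q^8 - 4*q^6 - 4*q^4 - 4*q^2 - 1) :=
      mul_pos (mul_pos (mul_pos (mul_pos (mul_pos (mul_pos ha0 hq0) h1) h2) hq21) hF1) hF2
    have hkeq : k = -(a * q * (q - 1) * (q + 1) * (q^2 + 1) *
        (a^2 * (2*q^14 + 2*q^12 + 3*q^10 + q^8) - q^6 - 3*q^4 - 2*q^2 - 2) *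
        (a^2 * (q^16 + 4*q^14 + 4*q^12 + 4*q^10 + 2*q^8)
          - 2*q^8 - 4*q^6 - 4*q^4 - 4*q^2 - 1)) := by rw [hk]; ring
    rw [hkeq]
    exact neg_ne_zero.mpr (ne_of_gt hprod)
  have haq2 : a * q^2 ≠ 0 := by positivity
  have hNne : (q^2 + 1) *
      (a^2*q^8 + 3*(a^2*q^10) + 2*(a^2*q^12) + 2*(a^2*q^14) - q^6 - 3*q^4 - 2*q^2 - 2) ≠ 0 :=
    ne_of_gt hNall
  rw [e1, e2, hr]
  field_simp [hane, hqne, hq21ne, hNne, hDne, hkne]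
  have hX : (q ^ 2 * (q ^ 2 * (q ^ 2 * (q ^ 2 * a ^ 2 * (1 + q ^ 2 * 3 + q ^ 4 * 2 + q ^ 6 * 2) - 1) - 3) - 2) - 2) * (q ^ 2 * (q ^ 2 * (q ^ 2 * (q ^ 2 * (a ^ 2 * (2 + q ^ 2 * 4 + q ^ 4 * 4 + q ^ 6 * 4 + q ^ 8) - 2) - 4) - 4) - 4) - 1) ≠ 0 :=
    mul_ne_zero (fun h0 => hN.ne' (by linear_combination h0))
      (fun h0 => hD.ne' (by linear_combination h0))
  rw [div_add' _ _ _ hX, div_mul_eq_mul_div, div_eq_iff hX]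
  rw [hg, hh, hk]
  ring
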